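/- Let k ≤ 15, let l satisfy 2^k − k ≤ l ≤ 2^k, and let d ≥ l + k. Then every level-l k-cube in the hypercube Q^d is 0-stackable: for all disjoint subsets S, K of {1,…,d} with |S| = l and |K| = k, letting A = {X : S ⊆ X ⊆ S ∪ K} and letting C_A be the configuration with one cup on each vertex of A ∪ {∅} and no cups elsewhere, Q^d is (C_A, ∅)-stackable. -/

import Mathlib

/-- A cup-stacking move in graph `G`: all cups from `u` are moved to `v`, where
`u ≠ v`, both have at least one cup, and `dist G u v = C u`. -/
def CupMove {V : Type*} [DecidableEq V] (G : SimpleGraph V) (C C' : V → ℕ) : Prop :=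
  ∃ u v : V, u ≠ v ∧ 1 ≤ C u ∧ 1 ≤ C v ∧ G.dist u v = C u ∧
    ∀ w, C' w = if w = u then 0 else if w = v then C u + C v else C w

/-- `G` is `(C, r)`-stackable: some finite sequence of cup-stacking moves starting
from `C` reaches the configuration with all `|C|` cups on `r` and none elsewhere. -/
def IsStackableConf {V : Type*} [Fintype V] [DecidableEq V]
    (G : SimpleGraph V) (C : V → ℕ) (r : V) : Prop :=
  Relation.ReflTransGen (CupMove G) C (fun w => if w = r then ∑ v, C v else 0)

/-- `G` is `r`-stackable: `(𝟏, r)`-stackable where `𝟏` has one cup on each vertex. -/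
def IsStackableAt {V : Type*} [Fintype V] [DecidableEq V]
    (G : SimpleGraph V) (r : V) : Prop :=
  IsStackableConf G (fun _ => 1) r

/-- `G` is stackable: `r`-stackable for every vertex `r`. -/
def IsStackable {V : Type*} [Fintype V] [DecidableEq V] (G : SimpleGraph V) : Prop :=
  ∀ r : V, IsStackableAt G r

open scoped symmDiff in
/-- The d-dimensional hypercube: vertices are subsets of {1,…,d}, adjacent iff
the symmetric difference has exactly one element. -/
def cubeGraph (d : ℕ) : SimpleGraph (Finset (Fin d)) :=
  SimpleGraph.fromRel (fun X Y => (X ∆ Y).card = 1)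

open scoped symmDiff

namespace CupStack

variable {d : ℕ}

lemma cube_adj {X Y : Finset (Fin d)} : (cubeGraph d).Adj X Y ↔ (X ∆ Y).card = 1 := by
  constructor
  · rintro ⟨hne, h | h⟩
    · exact h
    · rwa [symmDiff_comm]
  · intro h
    refine ⟨?_, Or.inl h⟩
    rintro rfl
    rw [symmDiff_self] at h
    simp at h

lemma exists_walk : ∀ (n : ℕ) (X Y : Finset (Fin d)), (X ∆ Y).card = n →
    ∃ p : (cubeGraph d).Walk X Y, p.length = n := by
  intro n
  induction n with
  | zero =>
    intro X Y h
    rw [Finset.card_eq_zero] at h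
    have : X = Y := by
      have := symmDiff_eq_bot.mp h
      exact this
    subst this
    exact ⟨SimpleGraph.Walk.nil, rfl⟩
  | succ n ih =>
    intro X Y h
    have hne : (X ∆ Y).Nonempty := by
      rw [← Finset.card_pos, h]; omega
    obtain ⟨a, ha⟩ := hne
    set X' : Finset (Fin d) := X ∆ {a} with hX'
    have hadj : (cubeGraph d).Adj X X' := by
      rw [cube_adj]
      have : X ∆ X' = {a} := by
        rw [hX', symmDiff_symmDiff_cancel_left]
      rw [this, Finset.card_singleton]
    have hcard : (X' ∆ Y).card = n := by
      have h1 : X' ∆ Y = (X ∆ Y) ∆ {a} := by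
        rw [hX', symmDiff_assoc, symmDiff_assoc, symmDiff_comm {a} Y]
      have h2 : ∀ (S : Finset (Fin d)), a ∈ S → S ∆ {a} = S.erase a := by
        intro S haS
        ext x
        rw [Finset.mem_symmDiff]
        simp only [Finset.mem_singleton, Finset.mem_erase]
        constructor
        · rintro (⟨hx, hxa⟩ | ⟨rfl, hx⟩)
          · exact ⟨hxa, hx⟩
          · exact absurd haS hx
        · rintro ⟨hxa, hx⟩
          exact Or.inl ⟨hx, hxa⟩
      rw [h1, h2 _ ha, Finset.card_erase_of_mem ha, h]
      rfl
    obtain ⟨p, hp⟩ := ih X' Y hcard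
    exact ⟨SimpleGraph.Walk.cons hadj p, by simp [hp]⟩

lemma card_le_walk_length {X Y : Finset (Fin d)} (p : (cubeGraph d).Walk X Y) :
    (X ∆ Y).card ≤ p.length := by
  induction p with
  | nil => simp [symmDiff_self]
  | @cons u v w hadj p ih =>
    have htri : (u ∆ w).card ≤ (u ∆ v).card + (v ∆ w).card := by
      calc (u ∆ w).card ≤ ((u ∆ v) ∪ (v ∆ w)).card :=
            Finset.card_le_card (symmDiff_triangle u v w)
        _ ≤ (u ∆ v).card + (v ∆ w).card := Finset.card_union_le _ _
    rw [cube_adj] at hadj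
    simp only [SimpleGraph.Walk.length_cons]
    omega

lemma cube_dist (X Y : Finset (Fin d)) : (cubeGraph d).dist X Y = (X ∆ Y).card := by
  obtain ⟨p, hp⟩ := exists_walk _ X Y rfl
  apply le_antisymm
  · calc (cubeGraph d).dist X Y ≤ p.length := SimpleGraph.dist_le p
      _ = (X ∆ Y).card := hp
  · have hreach : (cubeGraph d).Reachable X Y := ⟨p⟩
    obtain ⟨q, hq⟩ := hreach.exists_walk_length_eq_dist
    calc (X ∆ Y).card ≤ q.length := card_le_walk_length q
      _ = (cubeGraph d).dist X Y := hq

/-- Gatherable sets: a set of vertices whose cups (one each) can be gathered at a root. -/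
inductive Gath : Finset (Finset (Fin d)) → Finset (Fin d) → Prop
  | leaf (v : Finset (Fin d)) : Gath {v} v
  | comb {A B : Finset (Finset (Fin d))} {a b : Finset (Fin d)} :
      Gath A a → Gath B b → Disjoint A B → (a ∆ b).card = A.card → Gath (A ∪ B) b

lemma Gath.root_mem {A : Finset (Finset (Fin d))} {r : Finset (Fin d)} (h : Gath A r) :
    r ∈ A := by
  induction h with
  | leaf v => exact Finset.mem_singleton_self v
  | comb hA hB hd hc ihA ihB => exact Finset.mem_union_right _ ihB

theorem Gath.exec {A : Finset (Finset (Fin d))} {r : Finset (Fin d)} (h : Gath A r) :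
    ∀ C : Finset (Fin d) → ℕ, (∀ x ∈ A, C x = 1) →
    Relation.ReflTransGen (CupMove (cubeGraph d)) C
      (fun x => if x = r then A.card else if x ∈ A then 0 else C x) := by
  induction h with
  | leaf v =>
    intro C hC
    have : (fun x => if x = v then ({v} : Finset (Finset (Fin d))).card
        else if x ∈ ({v} : Finset (Finset (Fin d))) then 0 else C x) = C := by
      funext x
      by_cases hx : x = v
      · subst hx; simp [hC x (Finset.mem_singleton_self x)]
      · simp [hx]
    rw [this]
  | @comb A B a b hA hB hdisj hcard ihA ihB =>
    intro C hC
    have haA : a ∈ A := hA.root_mem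
    have hbB : b ∈ B := hB.root_mem
    have hab : a ≠ b := fun h => (Finset.disjoint_left.mp hdisj haA) (h ▸ hbB)
    have hApos : 1 ≤ A.card := Finset.card_pos.mpr ⟨a, haA⟩
    have hBpos : 1 ≤ B.card := Finset.card_pos.mpr ⟨b, hbB⟩
    set C1 : Finset (Fin d) → ℕ :=
      fun x => if x = b then B.card else if x ∈ B then 0 else C x with hC1
    set C2 : Finset (Fin d) → ℕ :=
      fun x => if x = a then A.card else if x ∈ A then 0 else C1 x with hC2
    have step1 := ihB C (fun x hx => hC x (Finset.mem_union_right _ hx))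
    have step2 := ihA C1 (by
      intro x hx
      have hxb : x ≠ b := fun h => (Finset.disjoint_left.mp hdisj hx) (h ▸ hbB)
      have hxB : x ∉ B := Finset.disjoint_left.mp hdisj hx
      simp only [hC1, if_neg hxb, if_neg hxB]
      exact hC x (Finset.mem_union_left _ hx))
    have hC2a : C2 a = A.card := by simp [hC2]
    have hC2b : C2 b = B.card := by
      have h1 : b ∉ A := Finset.disjoint_right.mp hdisj hbB
      simp [hC2, hC1, Ne.symm hab, h1]
    have move : CupMove (cubeGraph d) C2
        (fun w => if w = a then 0 else if w = b then C2 a + C2 b else C2 w) := by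
      refine ⟨a, b, hab, ?_, ?_, ?_, fun w => rfl⟩
      · rw [hC2a]; exact hApos
      · rw [hC2b]; exact hBpos
      · rw [cube_dist, hcard, hC2a]
    have hfinal : (fun w => if w = a then 0 else if w = b then C2 a + C2 b else C2 w) =
        (fun x => if x = b then (A ∪ B).card else if x ∈ A ∪ B then 0 else C x) := by
      funext w
      by_cases hwa : w = a
      · subst hwa
        rw [if_pos rfl, if_neg hab, if_pos (Finset.mem_union_left _ haA)]
      · rw [if_neg hwa]
        by_cases hwb : w = b
        · subst hwb
          rw [if_pos rfl, if_pos rfl, hC2a, hC2b,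
            Finset.card_union_of_disjoint hdisj]
        · rw [if_neg hwb, if_neg hwb]
          by_cases hwAB : w ∈ A ∪ B
          · rw [if_pos hwAB]
            rcases Finset.mem_union.mp hwAB with hw | hw
            · simp only [hC2, if_neg hwa, if_pos hw]
            · simp only [hC2, hC1, if_neg hwa,
                if_neg (Finset.disjoint_right.mp hdisj hw), if_neg hwb, if_pos hw]
          · rw [if_neg hwAB]
            simp only [Finset.mem_union, not_or] at hwAB
            simp only [hC2, hC1, if_neg hwa, if_neg hwAB.1, if_neg hwb, if_neg hwAB.2]
    have step3 : Relation.ReflTransGen (CupMove (cubeGraph d)) C2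
        (fun x => if x = b then (A ∪ B).card else if x ∈ A ∪ B then 0 else C x) :=
      hfinal ▸ Relation.ReflTransGen.single move
    exact step1.trans (step2.trans step3)


lemma Gath.map {n n' : ℕ} {A : Finset (Finset (Fin n))} {r : Finset (Fin n)}
    (h : Gath A r) (f : Finset (Fin n) → Finset (Fin n'))
    (hinj : Function.Injective f)
    (hd : ∀ x y, (f x ∆ f y).card = (x ∆ y).card) :
    Gath (A.image f) (f r) := by
  induction h with
  | leaf v => rw [Finset.image_singleton]; exact Gath.leaf (f v)
  | comb hA hB hdisj hcard ihA ihB =>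
    rw [Finset.image_union]
    exact Gath.comb ihA ihB ((Finset.disjoint_image hinj).mpr hdisj)
      (by rw [hd, hcard, Finset.card_image_of_injective _ hinj])

def unionList {n : ℕ} (L : List (Finset (Finset (Fin n)) × Finset (Fin n))) :
    Finset (Finset (Fin n)) :=
  L.foldr (fun p s => p.1 ∪ s) ∅

def GoodOn {n : ℕ} (U : Finset (Finset (Fin n))) (j : ℕ)
    (L : List (Finset (Finset (Fin n)) × Finset (Fin n))) : Prop :=
  (∀ p ∈ L, Gath p.1 p.2 ∧ p.1.card = p.2.card + j) ∧
  L.Pairwise (fun p q => Disjoint p.1 q.1) ∧ unionList L = U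

lemma unionList_cons {n : ℕ} (p) (L : List (Finset (Finset (Fin n)) × Finset (Fin n))) :
    unionList (p :: L) = p.1 ∪ unionList L := rfl

lemma unionList_append {n : ℕ} (L M : List (Finset (Finset (Fin n)) × Finset (Fin n))) :
    unionList (L ++ M) = unionList L ∪ unionList M := by
  induction L with
  | nil => simp [unionList]
  | cons p L ih => simp [unionList_cons, ih, Finset.union_assoc]

lemma unionList_map {n n' : ℕ} (L : List (Finset (Finset (Fin n)) × Finset (Fin n)))
    (f : Finset (Fin n) → Finset (Fin n')) :
    unionList (L.map (fun p => (p.1.image f, f p.2))) = (unionList L).image f := by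
  induction L with
  | nil => simp [unionList]
  | cons p L ih => simp [unionList_cons, ih, Finset.image_union]

lemma mem_subset_unionList {n : ℕ} {L : List (Finset (Finset (Fin n)) × Finset (Fin n))}
    {p} (hp : p ∈ L) : p.1 ⊆ unionList L := by
  induction L with
  | nil => simp at hp
  | cons q L ih =>
    rcases List.mem_cons.mp hp with rfl | hp
    · rw [unionList_cons]; exact Finset.subset_union_left
    · rw [unionList_cons]; exact (ih hp).trans Finset.subset_union_right

lemma GoodOn.map {n n' : ℕ} {U : Finset (Finset (Fin n))} {j c : ℕ} {L}
    (h : GoodOn U (j + c) L) (f : Finset (Fin n) → Finset (Fin n'))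
    (hinj : Function.Injective f)
    (hd : ∀ x y, (f x ∆ f y).card = (x ∆ y).card)
    (hc : ∀ x, (f x).card = x.card + c) :
    GoodOn (U.image f) j (L.map (fun p => (p.1.image f, f p.2))) := by
  obtain ⟨h1, h2, h3⟩ := h
  refine ⟨?_, ?_, ?_⟩
  · intro p hp
    obtain ⟨q, hq, rfl⟩ := List.mem_map.mp hp
    refine ⟨(h1 q hq).1.map f hinj hd, ?_⟩
    have := (h1 q hq).2
    rw [Finset.card_image_of_injective _ hinj, hc]
    omega
  · refine List.Pairwise.map _ ?_ h2
    intro p q hpq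
    exact (Finset.disjoint_image hinj).mpr hpq
  · rw [unionList_map, h3]

lemma GoodOn.append {n : ℕ} {U U' : Finset (Finset (Fin n))} {j : ℕ} {L L'}
    (h : GoodOn U j L) (h' : GoodOn U' j L') (hUU : Disjoint U U') :
    GoodOn (U ∪ U') j (L ++ L') := by
  obtain ⟨h1, h2, h3⟩ := h
  obtain ⟨h1', h2', h3'⟩ := h'
  refine ⟨?_, ?_, ?_⟩
  · intro p hp
    rcases List.mem_append.mp hp with hp | hp
    · exact h1 p hp
    · exact h1' p hp
  · rw [List.pairwise_append]
    refine ⟨h2, h2', ?_⟩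
    intro p hp q hq
    exact Finset.disjoint_of_subset_left (h3 ▸ mem_subset_unionList hp)
      (Finset.disjoint_of_subset_right (h3' ▸ mem_subset_unionList hq) hUU)
  · rw [unionList_append, h3, h3']

lemma disjoint_unionList {n : ℕ} {s : Finset (Finset (Fin n))}
    {L : List (Finset (Finset (Fin n)) × Finset (Fin n))}
    (h : ∀ q ∈ L, Disjoint s q.1) : Disjoint s (unionList L) := by
  induction L with
  | nil => simp [unionList]
  | cons q L ih =>
    rw [unionList_cons, Finset.disjoint_union_right]
    exact ⟨h q (List.mem_cons_self), ih (fun q hq => h q (List.mem_cons_of_mem _ hq))⟩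

lemma foldr_eq_unionList {n : ℕ} (L : List (Finset (Finset (Fin n)) × Finset (Fin n)))
    (T : Finset (Finset (Fin n))) :
    L.foldr (fun p s => p.1 ∪ s) T = unionList L ∪ T := by
  induction L with
  | nil => simp [unionList]
  | cons q M ihM => simp [unionList_cons, ihM, Finset.union_assoc]

lemma Gath.fold {n : ℕ} (L : List (Finset (Finset (Fin n)) × Finset (Fin n)))
    {T : Finset (Finset (Fin n))} {r : Finset (Fin n)} (hT : Gath T r)
    (h1 : ∀ p ∈ L, Gath p.1 p.2 ∧ (p.2 ∆ r).card = p.1.card)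
    (h2 : L.Pairwise (fun p q => Disjoint p.1 q.1))
    (h3 : ∀ p ∈ L, Disjoint p.1 T) :
    Gath (L.foldr (fun p s => p.1 ∪ s) T) r := by
  induction L with
  | nil => exact hT
  | cons p L ih =>
    have hrec := ih (fun q hq => h1 q (List.mem_cons_of_mem _ hq)) h2.of_cons
      (fun q hq => h3 q (List.mem_cons_of_mem _ hq))
    have hdisj : Disjoint p.1 (L.foldr (fun p s => p.1 ∪ s) T) := by
      rw [foldr_eq_unionList, Finset.disjoint_union_right]
      exact ⟨disjoint_unionList (fun q hq => (List.pairwise_cons.mp h2).1 q hq),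
        h3 p (List.mem_cons_self)⟩
    exact Gath.comb (h1 p (List.mem_cons_self)).1 hrec hdisj
      (h1 p (List.mem_cons_self)).2

def f0 {n : ℕ} (s : Finset (Fin n)) : Finset (Fin (n + 1)) := s.image Fin.castSucc

def f1 {n : ℕ} (s : Finset (Fin n)) : Finset (Fin (n + 1)) := insert (Fin.last n) (f0 s)

lemma f0_inj {n : ℕ} : Function.Injective (f0 (n := n)) :=
  Finset.image_injective (Fin.castSucc_injective n)

lemma last_not_mem_f0 {n : ℕ} (s : Finset (Fin n)) : Fin.last n ∉ f0 s := by
  intro h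
  obtain ⟨x, _, hx⟩ := Finset.mem_image.mp h
  exact absurd hx (Fin.castSucc_lt_last x).ne

lemma f1_inj {n : ℕ} : Function.Injective (f1 (n := n)) := by
  intro s t h
  apply f0_inj
  have hs := Finset.erase_insert (last_not_mem_f0 s)
  have ht := Finset.erase_insert (last_not_mem_f0 t)
  rw [← hs, ← ht]
  unfold f1 at h
  rw [h]

lemma hd0 {n : ℕ} (x y : Finset (Fin n)) : (f0 x ∆ f0 y).card = (x ∆ y).card := by
  unfold f0
  rw [← Finset.image_symmDiff _ _ (Fin.castSucc_injective n)]
  exact Finset.card_image_of_injective _ (Fin.castSucc_injective n)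

lemma insert_symmDiff_insert {n : ℕ} {a : Fin n} {X Y : Finset (Fin n)}
    (hX : a ∉ X) (hY : a ∉ Y) : (insert a X) ∆ (insert a Y) = X ∆ Y := by
  ext x
  rw [Finset.mem_symmDiff, Finset.mem_symmDiff]
  simp only [Finset.mem_insert]
  by_cases hxa : x = a
  · subst hxa; tauto
  · tauto

lemma hd1 {n : ℕ} (x y : Finset (Fin n)) : (f1 x ∆ f1 y).card = (x ∆ y).card := by
  unfold f1
  rw [insert_symmDiff_insert (last_not_mem_f0 x) (last_not_mem_f0 y)]
  exact hd0 x y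

lemma hc0 {n : ℕ} (x : Finset (Fin n)) : (f0 x).card = x.card + 0 :=
  Finset.card_image_of_injective _ (Fin.castSucc_injective n)

lemma hc1 {n : ℕ} (x : Finset (Fin n)) : (f1 x).card = x.card + 1 := by
  unfold f1
  rw [Finset.card_insert_of_notMem (last_not_mem_f0 x), hc0]

lemma exists_f0_eq {n : ℕ} {X : Finset (Fin (n + 1))} (hX : Fin.last n ∉ X) :
    ∃ s, f0 s = X := by
  refine ⟨X.preimage Fin.castSucc ((Fin.castSucc_injective n).injOn), ?_⟩
  ext y
  simp only [f0, Finset.mem_image, Finset.mem_preimage]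
  constructor
  · rintro ⟨z, hz, rfl⟩; exact hz
  · intro hy
    have hyl : y ≠ Fin.last n := fun h => hX (h ▸ hy)
    exact ⟨y.castPred hyl, by rwa [Fin.castSucc_castPred], Fin.castSucc_castPred y hyl⟩

lemma disjoint_halves {n : ℕ} :
    Disjoint ((Finset.univ : Finset (Finset (Fin n))).image f0)
      ((Finset.univ : Finset (Finset (Fin n))).image f1) := by
  rw [Finset.disjoint_left]
  intro X hX0 hX1
  obtain ⟨s, _, rfl⟩ := Finset.mem_image.mp hX0
  obtain ⟨t, _, ht⟩ := Finset.mem_image.mp hX1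
  exact last_not_mem_f0 s (by rw [← ht]; exact Finset.mem_insert_self _ _)

lemma union_halves {n : ℕ} :
    ((Finset.univ : Finset (Finset (Fin n))).image f0) ∪
      ((Finset.univ : Finset (Finset (Fin n))).image f1) =
      (Finset.univ : Finset (Finset (Fin (n + 1)))) := by
  apply Finset.eq_univ_of_forall
  intro X
  rw [Finset.mem_union]
  by_cases hl : Fin.last n ∈ X
  · right
    obtain ⟨s, hs⟩ := exists_f0_eq (X := X.erase (Fin.last n)) (Finset.notMem_erase _ _)
    exact Finset.mem_image.mpr ⟨s, Finset.mem_univ _, by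
      unfold f1; rw [hs, Finset.insert_erase hl]⟩
  · left
    obtain ⟨s, hs⟩ := exists_f0_eq hl
    exact Finset.mem_image.mpr ⟨s, Finset.mem_univ _, hs⟩

lemma translate_inj {n : ℕ} (T0 : Finset (Fin n)) :
    Function.Injective (fun x : Finset (Fin n) => x ∆ T0) := by
  intro x y h
  have h' : x ∆ T0 = y ∆ T0 := h
  have : (x ∆ T0) ∆ T0 = (y ∆ T0) ∆ T0 := by rw [h']
  rwa [symmDiff_symmDiff_cancel_right, symmDiff_symmDiff_cancel_right] at this

lemma translate_hd {n : ℕ} (T0 x y : Finset (Fin n)) :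
    ((x ∆ T0) ∆ (y ∆ T0)).card = (x ∆ y).card := by
  rw [symmDiff_symmDiff_symmDiff_comm, symmDiff_self, symmDiff_bot]

lemma translate_univ {n : ℕ} (T0 : Finset (Fin n)) :
    (Finset.univ : Finset (Finset (Fin n))).image (fun x => x ∆ T0) = Finset.univ := by
  apply Finset.eq_univ_of_forall
  intro X
  exact Finset.mem_image.mpr ⟨X ∆ T0, Finset.mem_univ _, by
    show (X ∆ T0) ∆ T0 = X
    rw [symmDiff_symmDiff_cancel_right]⟩

def isSpec (j m : ℕ) : Bool :=
  (m == 4 && (j == 3 || j == 4)) || (m == 5 && (j == 7 || j == 8 || j == 9 || j == 10))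

def okB : ℕ → ℕ → Bool
  | 0, j => j == 1
  | m + 1, j =>
    (decide (2 ^ (m + 1) - (m + 1) ≤ j) && decide (j ≤ 2 ^ (m + 1))) || isSpec j (m + 1)
      || (okB m j && okB m (j + 1))

def stackOk : ℕ → Bool
  | 0 => true
  | m + 1 => stackOk m && okB m 1


lemma special34 : ∃ L, GoodOn (Finset.univ : Finset (Finset (Fin 4))) 3 L := by
  refine ⟨[(({({0,1,3} : Finset (Fin 4))} ∪ (({({3} : Finset (Fin 4))} ∪ {({2,3} : Finset (Fin 4))}) ∪ ((({({0,2} : Finset (Fin 4))} ∪ {({2} : Finset (Fin 4))}) ∪ {({1} : Finset (Fin 4))}) ∪ {({0,1,2,3} : Finset (Fin 4))}))), ({0,1,2,3} : Finset (Fin 4))), (({({1,2} : Finset (Fin 4))} ∪ (((({({0,2,3} : Finset (Fin 4))} ∪ {({0,3} : Finset (Fin 4))}) ∪ {({1,3} : Finset (Fin 4))}) ∪ {({0} : Finset (Fin 4))}) ∪ {({1,2,3} : Finset (Fin 4))})), ({1,2,3} : Finset (Fin 4))), ((({({0,1,2} : Finset (Fin 4))} ∪ {({0,1} : Finset (Fin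 4))}) ∪ {(∅ : Finset (Fin 4))}), (∅ : Finset (Fin 4)))], ?_, by decide, by decide⟩
  · intro p hp
    simp only [List.mem_cons, List.not_mem_nil, or_false] at hp
    rcases hp with rfl | rfl | rfl
    · exact ⟨(Gath.comb (Gath.leaf ({0,1,3} : Finset (Fin 4))) (Gath.comb (Gath.comb (Gath.leaf ({3} : Finset (Fin 4))) (Gath.leaf ({2,3} : Finset (Fin 4))) (by decide) (by decide)) (Gath.comb (Gath.comb (Gath.comb (Gath.leaf ({0,2} : Finset (Fin 4))) (Gath.leaf ({2} : Finset (Fin 4))) (by decide) (by decide)) (Gath.leaf ({1} : Finset (Fin 4))) (by decide) (by decide)) (Gath.leaf ({0,1,2,3} : Finset (Fin 4))) (by decide) (by decide)) (by decide) (by decide)) (by decide) (by decide)), by decide⟩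
    · exact ⟨(Gath.comb (Gath.leaf ({1,2} : Finset (Fin 4))) (Gath.comb (Gath.comb (Gath.comb (Gath.comb (Gath.leaf ({0,2,3} : Finset (Fin 4))) (Gath.leaf ({0,3} : Finset (Fin 4))) (by decide) (by decide)) (Gath.leaf ({1,3} : Finset (Fin 4))) (by decide) (by decide)) (Gath.leaf ({0} : Finset (Fin 4))) (by decide) (by decide)) (Gath.leaf ({1,2,3} : Finset (Fin 4))) (by decide) (by decide)) (by decide) (by decide)), by decide⟩
    · exact ⟨(Gath.comb (Gath.comb (Gath.leaf ({0,1,2} : Finset (Fin 4))) (Gath.leaf ({0,1} : Finset (Fin 4))) (by decide) (by decide)) (Gath.leaf (∅ : Finset (Fin 4))) (by decide) (by decide)), by decide⟩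

lemma special44 : ∃ L, GoodOn (Finset.univ : Finset (Finset (Fin 4))) 4 L := by
  refine ⟨[((({({0,1} : Finset (Fin 4))} ∪ {({1} : Finset (Fin 4))}) ∪ ({({2,3} : Finset (Fin 4))} ∪ (({({0,3} : Finset (Fin 4))} ∪ {({0,2,3} : Finset (Fin 4))}) ∪ ({({1,2} : Finset (Fin 4))} ∪ {({1,2,3} : Finset (Fin 4))})))), ({1,2,3} : Finset (Fin 4))), ((((({({0,1,2} : Finset (Fin 4))} ∪ {({0,1,2,3} : Finset (Fin 4))}) ∪ {({0,2} : Finset (Fin 4))}) ∪ {({0,1,3} : Finset (Fin 4))}) ∪ {({2} : Finset (Fin 4))}), ({2} : Finset (Fin 4))), ((({({3} : Finset (Fin 4))} ∪ {({1,3} : Finset (Fin 4))}) ∪ ({({0} : Finset (Fin 4))} ∪ {(∅ : Finset (Fin 4))})), (∅ : Finset (Fin 4)))], ?_, by decide, by decide⟩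
  · intro p hp
    simp only [List.mem_cons, List.not_mem_nil, or_false] at hp
    rcases hp with rfl | rfl | rfl
    · exact ⟨(Gath.comb (Gath.comb (Gath.leaf ({0,1} : Finset (Fin 4))) (Gath.leaf ({1} : Finset (Fin 4))) (by decide) (by decide)) (Gath.comb (Gath.leaf ({2,3} : Finset (Fin 4))) (Gath.comb (Gath.comb (Gath.leaf ({0,3} : Finset (Fin 4))) (Gath.leaf ({0,2,3} : Finset (Fin 4))) (by decide) (by decide)) (Gath.comb (Gath.leaf ({1,2} : Finset (Fin 4))) (Gath.leaf ({1,2,3} : Finset (Fin 4))) (by decide) (by decide)) (by decide) (by decide)) (by decide) (by decide)) (by decide) (by decide)), by decide⟩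
    · exact ⟨(Gath.comb (Gath.comb (Gath.comb (Gath.comb (Gath.leaf ({0,1,2} : Finset (Fin 4))) (Gath.leaf ({0,1,2,3} : Finset (Fin 4))) (by decide) (by decide)) (Gath.leaf ({0,2} : Finset (Fin 4))) (by decide) (by decide)) (Gath.leaf ({0,1,3} : Finset (Fin 4))) (by decide) (by decide)) (Gath.leaf ({2} : Finset (Fin 4))) (by decide) (by decide)), by decide⟩
    · exact ⟨(Gath.comb (Gath.comb (Gath.leaf ({3} : Finset (Fin 4))) (Gath.leaf ({1,3} : Finset (Fin 4))) (by decide) (by decide)) (Gath.comb (Gath.leaf ({0} : Finset (Fin 4))) (Gath.leaf (∅ : Finset (Fin 4))) (by decide) (by decide)) (by decide) (by decide)), by decide⟩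

lemma special75 : ∃ L, GoodOn (Finset.univ : Finset (Finset (Fin 5))) 7 L := by
  refine ⟨[(({({0,2,3,4} : Finset (Fin 5))} ∪ (({({0,3} : Finset (Fin 5))} ∪ {({0,3,4} : Finset (Fin 5))}) ∪ (({({0,1,2,3} : Finset (Fin 5))} ∪ {({0,1,2} : Finset (Fin 5))}) ∪ ((({({1,2,3} : Finset (Fin 5))} ∪ {({1,3} : Finset (Fin 5))}) ∪ {({0,1} : Finset (Fin 5))}) ∪ ((({({0,2,4} : Finset (Fin 5))} ∪ {({0,2} : Finset (Fin 5))}) ∪ {({1,2} : Finset (Fin 5))}) ∪ {({0,1,2,3,4} : Finset (Fin 5))}))))), ({0,1,2,3,4} : Finset (Fin 5))), (((({({1,4} : Finset (Fin 5))} ∪ {({1,3,4} : Finset (Fin 5))}) ∪ {({1} : Finset (Fin 5))}) ∪ (({({3} : Finset (Fin 5))} ∪ {({3,4} : Finset (Fin 5))}) ∪ ((((({({0,1,4} : Finset (Fin 5))} ∪ {({0,1,2,4} : Finset (Fin 5))}) ∪ {({1,2,3,4} : Finset (Fin 5))}) ∪ {({0,1,3} : Finset (Fin 5))}) ∪ {({2}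 : Finset (Fin 5))}) ∪ {({0,1,3,4} : Finset (Fin 5))}))), ({0,1,3,4} : Finset (Fin 5))), ((({({0} : Finset (Fin 5))} ∪ {({0,4} : Finset (Fin 5))}) ∪ ((({({2,3} : Finset (Fin 5))} ∪ {({2,3,4} : Finset (Fin 5))}) ∪ {({0,2,3} : Finset (Fin 5))}) ∪ (({({4} : Finset (Fin 5))} ∪ {(∅ : Finset (Fin 5))}) ∪ ({({1,2,4} : Finset (Fin 5))} ∪ {({2,4} : Finset (Fin 5))})))), ({2,4} : Finset (Fin 5)))], ?_, by decide, by decide⟩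
  · intro p hp
    simp only [List.mem_cons, List.not_mem_nil, or_false] at hp
    rcases hp with rfl | rfl | rfl
    · exact ⟨(Gath.comb (Gath.leaf ({0,2,3,4} : Finset (Fin 5))) (Gath.comb (Gath.comb (Gath.leaf ({0,3} : Finset (Fin 5))) (Gath.leaf ({0,3,4} : Finset (Fin 5))) (by decide) (by decide)) (Gath.comb (Gath.comb (Gath.leaf ({0,1,2,3} : Finset (Fin 5))) (Gath.leaf ({0,1,2} : Finset (Fin 5))) (by decide) (by decide)) (Gath.comb (Gath.comb (Gath.comb (Gath.leaf ({1,2,3} : Finset (Fin 5))) (Gath.leaf ({1,3} : Finset (Fin 5))) (by decide) (by decide)) (Gath.leaf ({0,1} : Finset (Fin 5))) (by decide) (by decide)) (Gath.comb (Gath.comb (Gath.comb (Gath.leaf ({0,2,4} : Finset (Fin 5))) (Gath.leaf ({0,2} : Finset (Fin 5))) (by decide) (by decide)) (Gath.leaf ({1,2} : Finset (Fin 5))) (by decide) (by decide)) (Gath.leaf ({0,1,2,3,4} : Finset (Fin 5))) (by decide) (by decide)) (by decide) (by decide)) (by decide) (by decide)) (by decide) (by decide)) (by decide) (by decide)), by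 decide⟩
    · exact ⟨(Gath.comb (Gath.comb (Gath.comb (Gath.leaf ({1,4} : Finset (Fin 5))) (Gath.leaf ({1,3,4} : Finset (Fin 5))) (by decide) (by decide)) (Gath.leaf ({1} : Finset (Fin 5))) (by decide) (by decide)) (Gath.comb (Gath.comb (Gath.leaf ({3} : Finset (Fin 5))) (Gath.leaf ({3,4} : Finset (Fin 5))) (by decide) (by decide)) (Gath.comb (Gath.comb (Gath.comb (Gath.comb (Gath.comb (Gath.leaf ({0,1,4} : Finset (Fin 5))) (Gath.leaf ({0,1,2,4} : Finset (Fin 5))) (by decide) (by decide)) (Gath.leaf ({1,2,3,4} : Finset (Fin 5))) (by decide) (by decide)) (Gath.leaf ({0,1,3} : Finset (Fin 5))) (by decide) (by decide)) (Gath.leaf ({2} : Finset (Fin 5))) (by decide) (by decide)) (Gath.leaf ({0,1,3,4} : Finset (Fin 5))) (by decide) (by decide)) (by decide) (by decide)) (by decide) (by decide)), by decide⟩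
    · exact ⟨(Gath.comb (Gath.comb (Gath.leaf ({0} : Finset (Fin 5))) (Gath.leaf ({0,4} : Finset (Fin 5))) (by decide) (by decide)) (Gath.comb (Gath.comb (Gath.comb (Gath.leaf ({2,3} : Finset (Fin 5))) (Gath.leaf ({2,3,4} : Finset (Fin 5))) (by decide) (by decide)) (Gath.leaf ({0,2,3} : Finset (Fin 5))) (by decide) (by decide)) (Gath.comb (Gath.comb (Gath.leaf ({4} : Finset (Fin 5))) (Gath.leaf (∅ : Finset (Fin 5))) (by decide) (by decide)) (Gath.comb (Gath.leaf ({1,2,4} : Finset (Fin 5))) (Gath.leaf ({2,4} : Finset (Fin 5))) (by decide) (by decide)) (by decide) (by decide)) (by decide) (by decide)) (by decide) (by decide)), by decide⟩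

lemma special85 : ∃ L, GoodOn (Finset.univ : Finset (Finset (Fin 5))) 8 L := by
  refine ⟨[((({({0,1,3,4} : Finset (Fin 5))} ∪ {({0,3,4} : Finset (Fin 5))}) ∪ (({({1,4} : Finset (Fin 5))} ∪ {({1,3,4} : Finset (Fin 5))}) ∪ (((({({1,2,4} : Finset (Fin 5))} ∪ {({2,4} : Finset (Fin 5))}) ∪ {({1,2} : Finset (Fin 5))}) ∪ {({0} : Finset (Fin 5))}) ∪ ((({({1,2,3} : Finset (Fin 5))} ∪ {({2,3} : Finset (Fin 5))}) ∪ {({3,4} : Finset (Fin 5))}) ∪ ({({0,2,3,4} : Finset (Fin 5))} ∪ {({0,1,2,3,4} : Finset (Fin 5))}))))), ({0,1,2,3,4} : Finset (Fin 5))), ((({({0,3} : Finset (Fin 5))} ∪ {({0,1,3} : Finset (Fin 5))}) ∪ ({({0,1} : Finset (Fin 5))} ∪ (({({0,1,2,3} : Finset (Fin 5))} ∪ {({0,1,2} : Finset (Fin 5))}) ∪ (((({({0,2,4} : Finset (Fin 5))} ∪ {({0,1,2,4} : Finset (Fin 5))}) ∪ {({0,2} : Finset (Fin 5))}) ∪ {({2,3,4}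 : Finset (Fin 5))}) ∪ ({({0,4} : Finset (Fin 5))} ∪ {({0,1,4} : Finset (Fin 5))}))))), ({0,1,4} : Finset (Fin 5))), ((((({({1,3} : Finset (Fin 5))} ∪ {({3} : Finset (Fin 5))}) ∪ {({0,2,3} : Finset (Fin 5))}) ∪ {({1,2,3,4} : Finset (Fin 5))}) ∪ ({({2} : Finset (Fin 5))} ∪ ({({4} : Finset (Fin 5))} ∪ ({({1} : Finset (Fin 5))} ∪ {(∅ : Finset (Fin 5))})))), (∅ : Finset (Fin 5)))], ?_, by decide, by decide⟩
  · intro p hp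
    simp only [List.mem_cons, List.not_mem_nil, or_false] at hp
    rcases hp with rfl | rfl | rfl
    · exact ⟨(Gath.comb (Gath.comb (Gath.leaf ({0,1,3,4} : Finset (Fin 5))) (Gath.leaf ({0,3,4} : Finset (Fin 5))) (by decide) (by decide)) (Gath.comb (Gath.comb (Gath.leaf ({1,4} : Finset (Fin 5))) (Gath.leaf ({1,3,4} : Finset (Fin 5))) (by decide) (by decide)) (Gath.comb (Gath.comb (Gath.comb (Gath.comb (Gath.leaf ({1,2,4} : Finset (Fin 5))) (Gath.leaf ({2,4} : Finset (Fin 5))) (by decide) (by decide)) (Gath.leaf ({1,2} : Finset (Fin 5))) (by decide) (by decide)) (Gath.leaf ({0} : Finset (Fin 5))) (by decide) (by decide)) (Gath.comb (Gath.comb (Gath.comb (Gath.leaf ({1,2,3} : Finset (Fin 5))) (Gath.leaf ({2,3} : Finset (Fin 5))) (by decide) (by decide)) (Gath.leaf ({3,4} : Finset (Fin 5))) (by decide) (by decide)) (Gath.comb (Gath.leaf ({0,2,3,4} : Finset (Fin 5))) (Gath.leaf ({0,1,2,3,4} : Finset (Fin 5))) (by decide) (by decide)) (by decide) (by decide)) (by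 decide) (by decide)) (by decide) (by decide)) (by decide) (by decide)), by decide⟩
    · exact ⟨(Gath.comb (Gath.comb (Gath.leaf ({0,3} : Finset (Fin 5))) (Gath.leaf ({0,1,3} : Finset (Fin 5))) (by decide) (by decide)) (Gath.comb (Gath.leaf ({0,1} : Finset (Fin 5))) (Gath.comb (Gath.comb (Gath.leaf ({0,1,2,3} : Finset (Fin 5))) (Gath.leaf ({0,1,2} : Finset (Fin 5))) (by decide) (by decide)) (Gath.comb (Gath.comb (Gath.comb (Gath.comb (Gath.leaf ({0,2,4} : Finset (Fin 5))) (Gath.leaf ({0,1,2,4} : Finset (Fin 5))) (by decide) (by decide)) (Gath.leaf ({0,2} : Finset (Fin 5))) (by decide) (by decide)) (Gath.leaf ({2,3,4} : Finset (Fin 5))) (by decide) (by decide)) (Gath.comb (Gath.leaf ({0,4} : Finset (Fin 5))) (Gath.leaf ({0,1,4} : Finset (Fin 5))) (by decide) (by decide)) (by decide) (by decide)) (by decide) (by decide)) (by decide) (by decide)) (by decide) (by decide)), by decide⟩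
    · exact ⟨(Gath.comb (Gath.comb (Gath.comb (Gath.comb (Gath.leaf ({1,3} : Finset (Fin 5))) (Gath.leaf ({3} : Finset (Fin 5))) (by decide) (by decide)) (Gath.leaf ({0,2,3} : Finset (Fin 5))) (by decide) (by decide)) (Gath.leaf ({1,2,3,4} : Finset (Fin 5))) (by decide) (by decide)) (Gath.comb (Gath.leaf ({2} : Finset (Fin 5))) (Gath.comb (Gath.leaf ({4} : Finset (Fin 5))) (Gath.comb (Gath.leaf ({1} : Finset (Fin 5))) (Gath.leaf (∅ : Finset (Fin 5))) (by decide) (by decide)) (by decide) (by decide)) (by decide) (by decide)) (by decide) (by decide)), by decide⟩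

lemma special95 : ∃ L, GoodOn (Finset.univ : Finset (Finset (Fin 5))) 9 L := by
  refine ⟨[((((({({1,2} : Finset (Fin 5))} ∪ {({1,2,4} : Finset (Fin 5))}) ∪ {({0,1,4} : Finset (Fin 5))}) ∪ {({0,3} : Finset (Fin 5))}) ∪ ((((({({0,2,4} : Finset (Fin 5))} ∪ {({0,4} : Finset (Fin 5))}) ∪ {({1,4} : Finset (Fin 5))}) ∪ {({0,1,2,3,4} : Finset (Fin 5))}) ∪ {({0} : Finset (Fin 5))}) ∪ ((({({0,1,2,3} : Finset (Fin 5))} ∪ {({0,1,2} : Finset (Fin 5))}) ∪ {({0,1,3} : Finset (Fin 5))}) ∪ {({1,2,3,4} : Finset (Fin 5))}))), ({1,2,3,4} : Finset (Fin 5))), (({({2,3} : Finset (Fin 5))} ∪ (({({2,4} : Finset (Fin 5))} ∪ {({4} : Finset (Fin 5))}) ∪ (({({1,3} : Finset (Fin 5))} ∪ {({1,3,4} : Finset (Fin 5))}) ∪ ((({({0,3,4} : Finset (Fin 5))} ∪ {({0,1,3,4} : Finset (Fin 5))}) ∪ {({0,1} : Finset (Fin 5))}) ∪ ({({3,4} :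 Finset (Fin 5))} ∪ {({3} : Finset (Fin 5))}))))), ({3} : Finset (Fin 5))), ((((({({0,2,3,4} : Finset (Fin 5))} ∪ {({0,2,3} : Finset (Fin 5))}) ∪ {({1,2,3} : Finset (Fin 5))}) ∪ {({0,1,2,4} : Finset (Fin 5))}) ∪ ({({1} : Finset (Fin 5))} ∪ ((({({0,2} : Finset (Fin 5))} ∪ {({2} : Finset (Fin 5))}) ∪ {({2,3,4} : Finset (Fin 5))}) ∪ {(∅ : Finset (Fin 5))}))), (∅ : Finset (Fin 5)))], ?_, by decide, by decide⟩
  · intro p hp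
    simp only [List.mem_cons, List.not_mem_nil, or_false] at hp
    rcases hp with rfl | rfl | rfl
    · exact ⟨(Gath.comb (Gath.comb (Gath.comb (Gath.comb (Gath.leaf ({1,2} : Finset (Fin 5))) (Gath.leaf ({1,2,4} : Finset (Fin 5))) (by decide) (by decide)) (Gath.leaf ({0,1,4} : Finset (Fin 5))) (by decide) (by decide)) (Gath.leaf ({0,3} : Finset (Fin 5))) (by decide) (by decide)) (Gath.comb (Gath.comb (Gath.comb (Gath.comb (Gath.comb (Gath.leaf ({0,2,4} : Finset (Fin 5))) (Gath.leaf ({0,4} : Finset (Fin 5))) (by decide) (by decide)) (Gath.leaf ({1,4} : Finset (Fin 5))) (by decide) (by decide)) (Gath.leaf ({0,1,2,3,4} : Finset (Fin 5))) (by decide) (by decide)) (Gath.leaf ({0} : Finset (Fin 5))) (by decide) (by decide)) (Gath.comb (Gath.comb (Gath.comb (Gath.leaf ({0,1,2,3} : Finset (Fin 5))) (Gath.leaf ({0,1,2} : Finset (Fin 5))) (by decide) (by decide)) (Gath.leaf ({0,1,3} : Finset (Fin 5))) (by decide) (by decide)) (Gath.leaf ({1,2,3,4} : Finset (Fin 5)))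 (by decide) (by decide)) (by decide) (by decide)) (by decide) (by decide)), by decide⟩
    · exact ⟨(Gath.comb (Gath.leaf ({2,3} : Finset (Fin 5))) (Gath.comb (Gath.comb (Gath.leaf ({2,4} : Finset (Fin 5))) (Gath.leaf ({4} : Finset (Fin 5))) (by decide) (by decide)) (Gath.comb (Gath.comb (Gath.leaf ({1,3} : Finset (Fin 5))) (Gath.leaf ({1,3,4} : Finset (Fin 5))) (by decide) (by decide)) (Gath.comb (Gath.comb (Gath.comb (Gath.leaf ({0,3,4} : Finset (Fin 5))) (Gath.leaf ({0,1,3,4} : Finset (Fin 5))) (by decide) (by decide)) (Gath.leaf ({0,1} : Finset (Fin 5))) (by decide) (by decide)) (Gath.comb (Gath.leaf ({3,4} : Finset (Fin 5))) (Gath.leaf ({3} : Finset (Fin 5))) (by decide) (by decide)) (by decide) (by decide)) (by decide) (by decide)) (by decide) (by decide)) (by decide) (by decide)), by decide⟩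
    · exact ⟨(Gath.comb (Gath.comb (Gath.comb (Gath.comb (Gath.leaf ({0,2,3,4} : Finset (Fin 5))) (Gath.leaf ({0,2,3} : Finset (Fin 5))) (by decide) (by decide)) (Gath.leaf ({1,2,3} : Finset (Fin 5))) (by decide) (by decide)) (Gath.leaf ({0,1,2,4} : Finset (Fin 5))) (by decide) (by decide)) (Gath.comb (Gath.leaf ({1} : Finset (Fin 5))) (Gath.comb (Gath.comb (Gath.comb (Gath.leaf ({0,2} : Finset (Fin 5))) (Gath.leaf ({2} : Finset (Fin 5))) (by decide) (by decide)) (Gath.leaf ({2,3,4} : Finset (Fin 5))) (by decide) (by decide)) (Gath.leaf (∅ : Finset (Fin 5))) (by decide) (by decide)) (by decide) (by decide)) (by decide) (by decide)), by decide⟩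

lemma special105 : ∃ L, GoodOn (Finset.univ : Finset (Finset (Fin 5))) 10 L := by
  refine ⟨[(({({2,3} : Finset (Fin 5))} ∪ (({({0,1,2,4} : Finset (Fin 5))} ∪ {({0,1,2} : Finset (Fin 5))}) ∪ (({({1,2} : Finset (Fin 5))} ∪ {({1,2,4} : Finset (Fin 5))}) ∪ ((((({({0,2,3,4} : Finset (Fin 5))} ∪ {({0,2,3} : Finset (Fin 5))}) ∪ {({0,1,3} : Finset (Fin 5))}) ∪ {({0,2} : Finset (Fin 5))}) ∪ {({0,1,3,4} : Finset (Fin 5))}) ∪ {({2} : Finset (Fin 5))})))), ({2} : Finset (Fin 5))), (((({({1,2,3} : Finset (Fin 5))} ∪ {({0,1,2,3} : Finset (Fin 5))}) ∪ {({0,3} : Finset (Fin 5))}) ∪ ((({({2,3,4} : Finset (Fin 5))} ∪ {({2,4} : Finset (Fin 5))}) ∪ {({1,2,3,4} : Finset (Fin 5))}) ∪ (((({({1} : Finset (Fin 5))} ∪ {({0,1} : Finset (Fin 5))}) ∪ {({1,3} : Finset (Fin 5))}) ∪ {({0,1,2,3,4} : Finset (Fin 5))}) ∪ {({4} : Finset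 (Fin 5))}))), ({4} : Finset (Fin 5))), ((({({0,2,4} : Finset (Fin 5))} ∪ {({0,4} : Finset (Fin 5))}) ∪ ({({3} : Finset (Fin 5))} ∪ (({({0,3,4} : Finset (Fin 5))} ∪ {({3,4} : Finset (Fin 5))}) ∪ ({({0} : Finset (Fin 5))} ∪ ((({({1,4} : Finset (Fin 5))} ∪ {({0,1,4} : Finset (Fin 5))}) ∪ {({1,3,4} : Finset (Fin 5))}) ∪ {(∅ : Finset (Fin 5))}))))), (∅ : Finset (Fin 5)))], ?_, by decide, by decide⟩
  · intro p hp
    simp only [List.mem_cons, List.not_mem_nil, or_false] at hp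
    rcases hp with rfl | rfl | rfl
    · exact ⟨(Gath.comb (Gath.leaf ({2,3} : Finset (Fin 5))) (Gath.comb (Gath.comb (Gath.leaf ({0,1,2,4} : Finset (Fin 5))) (Gath.leaf ({0,1,2} : Finset (Fin 5))) (by decide) (by decide)) (Gath.comb (Gath.comb (Gath.leaf ({1,2} : Finset (Fin 5))) (Gath.leaf ({1,2,4} : Finset (Fin 5))) (by decide) (by decide)) (Gath.comb (Gath.comb (Gath.comb (Gath.comb (Gath.comb (Gath.leaf ({0,2,3,4} : Finset (Fin 5))) (Gath.leaf ({0,2,3} : Finset (Fin 5))) (by decide) (by decide)) (Gath.leaf ({0,1,3} : Finset (Fin 5))) (by decide) (by decide)) (Gath.leaf ({0,2} : Finset (Fin 5))) (by decide) (by decide)) (Gath.leaf ({0,1,3,4} : Finset (Fin 5))) (by decide) (by decide)) (Gath.leaf ({2} : Finset (Fin 5))) (by decide) (by decide)) (by decide) (by decide)) (by decide) (by decide)) (by decide) (by decide)), by decide⟩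
    · exact ⟨(Gath.comb (Gath.comb (Gath.comb (Gath.leaf ({1,2,3} : Finset (Fin 5))) (Gath.leaf ({0,1,2,3} : Finset (Fin 5))) (by decide) (by decide)) (Gath.leaf ({0,3} : Finset (Fin 5))) (by decide) (by decide)) (Gath.comb (Gath.comb (Gath.comb (Gath.leaf ({2,3,4} : Finset (Fin 5))) (Gath.leaf ({2,4} : Finset (Fin 5))) (by decide) (by decide)) (Gath.leaf ({1,2,3,4} : Finset (Fin 5))) (by decide) (by decide)) (Gath.comb (Gath.comb (Gath.comb (Gath.comb (Gath.leaf ({1} : Finset (Fin 5))) (Gath.leaf ({0,1} : Finset (Fin 5))) (by decide) (by decide)) (Gath.leaf ({1,3} : Finset (Fin 5))) (by decide) (by decide)) (Gath.leaf ({0,1,2,3,4} : Finset (Fin 5))) (by decide) (by decide)) (Gath.leaf ({4} : Finset (Fin 5))) (by decide) (by decide)) (by decide) (by decide)) (by decide) (by decide)), by decide⟩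
    · exact ⟨(Gath.comb (Gath.comb (Gath.leaf ({0,2,4} : Finset (Fin 5))) (Gath.leaf ({0,4} : Finset (Fin 5))) (by decide) (by decide)) (Gath.comb (Gath.leaf ({3} : Finset (Fin 5))) (Gath.comb (Gath.comb (Gath.leaf ({0,3,4} : Finset (Fin 5))) (Gath.leaf ({3,4} : Finset (Fin 5))) (by decide) (by decide)) (Gath.comb (Gath.leaf ({0} : Finset (Fin 5))) (Gath.comb (Gath.comb (Gath.comb (Gath.leaf ({1,4} : Finset (Fin 5))) (Gath.leaf ({0,1,4} : Finset (Fin 5))) (by decide) (by decide)) (Gath.leaf ({1,3,4} : Finset (Fin 5))) (by decide) (by decide)) (Gath.leaf (∅ : Finset (Fin 5))) (by decide) (by decide)) (by decide) (by decide)) (by decide) (by decide)) (by decide) (by decide)) (by decide) (by decide)), by decide⟩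

lemma card_univ_finset_fin (m : ℕ) :
    (Finset.univ : Finset (Finset (Fin m))).card = 2 ^ m := by
  rw [Finset.card_univ, Fintype.card_finset, Fintype.card_fin]

theorem main : ∀ m : ℕ,
    (stackOk m = true → Gath (Finset.univ : Finset (Finset (Fin m))) ∅) ∧
    (∀ j, okB m j = true → stackOk m = true →
      ∃ L, GoodOn (Finset.univ : Finset (Finset (Fin m))) j L) := by
  intro m
  induction m with
  | zero =>
    constructor
    · intro _
      have : (Finset.univ : Finset (Finset (Fin 0))) = {∅} := by decide
      rw [this]
      exact Gath.leaf ∅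
    · intro j hj _
      have hj1 : j = 1 := by
        simp only [okB, beq_iff_eq] at hj
        exact hj
      subst hj1
      refine ⟨[({∅}, ∅)], ?_, ?_, ?_⟩
      · intro p hp
        rw [List.mem_singleton] at hp
        subst hp
        exact ⟨Gath.leaf ∅, by decide⟩
      · simp
      · decide
  | succ n ih =>
    have hstack : stackOk (n + 1) = true →
        Gath (Finset.univ : Finset (Finset (Fin (n + 1)))) ∅ := by
      intro hok
      rw [stackOk, Bool.and_eq_true] at hok
      obtain ⟨L, hL⟩ := ih.2 1 hok.2 hok.1
      have hlow : Gath ((Finset.univ : Finset (Finset (Fin n))).image f0) ∅ := by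
        have := (ih.1 hok.1).map f0 f0_inj hd0
        rwa [show f0 (∅ : Finset (Fin n)) = ∅ from Finset.image_empty _] at this
      have hL' : GoodOn (Finset.univ : Finset (Finset (Fin n))) (0 + 1) L := by
        rwa [Nat.zero_add]
      have hup := hL'.map f1 f1_inj hd1 hc1
      have hfold := Gath.fold (L.map (fun p => (p.1.image f1, f1 p.2))) hlow
        (fun p hp => ⟨(hup.1 p hp).1, by
          have := (hup.1 p hp).2
          rw [← Finset.bot_eq_empty, symmDiff_bot]
          omega⟩)
        hup.2.1
        (fun p hp => by
          refine Finset.disjoint_of_subset_left ?_ disjoint_halves.symm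
          exact hup.2.2 ▸ mem_subset_unionList hp)
      rw [foldr_eq_unionList, hup.2.2, Finset.union_comm, union_halves] at hfold
      exact hfold
    refine ⟨hstack, ?_⟩
    intro j hok hsok
    by_cases hsing : 2 ^ (n + 1) - (n + 1) ≤ j ∧ j ≤ 2 ^ (n + 1)
    · -- single piece: whole cube gathered at a rank (2^(n+1) - j) vertex
      have hle : 2 ^ (n + 1) - j ≤ (Finset.univ : Finset (Fin (n + 1))).card := by
        rw [Finset.card_univ, Fintype.card_fin]
        omega
      obtain ⟨T0, _, hT0card⟩ := Finset.exists_subset_card_eq hle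
      have hG := (hstack hsok).map (fun x => x ∆ T0) (translate_inj T0) (translate_hd T0)
      rw [translate_univ] at hG
      have hG : Gath (Finset.univ : Finset (Finset (Fin (n + 1)))) T0 := by
        have e : (∅ : Finset (Fin (n + 1))) ∆ T0 = T0 := by
          rw [← Finset.bot_eq_empty, bot_symmDiff]
        exact e ▸ hG
      refine ⟨[(Finset.univ, T0)], ?_, ?_, ?_⟩
      · intro p hp
        rw [List.mem_singleton] at hp
        subst hp
        refine ⟨hG, ?_⟩
        rw [card_univ_finset_fin, hT0card]
        omega
      · simp
      · simp [unionList]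
    · by_cases hspec : isSpec j (n + 1) = true
      · simp only [isSpec, Bool.or_eq_true, Bool.and_eq_true, beq_iff_eq] at hspec
        rcases hspec with ⟨h4, hj⟩ | ⟨h5, hj⟩
        · have hn : n = 3 := by omega
          subst hn
          rcases hj with rfl | rfl
          · exact special34
          · exact special44
        · have hn : n = 4 := by omega
          subst hn
          rcases hj with ((rfl | rfl) | rfl) | rfl
          · exact special75
          · exact special85
          · exact special95
          · exact special105
      · have hsok' : stackOk n = true := by
          rw [stackOk, Bool.and_eq_true] at hsok
          exact hsok.1
        have hok' : okB n j = true ∧ okB n (j + 1) = true := by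
          rw [okB, Bool.or_eq_true, Bool.or_eq_true, Bool.and_eq_true, Bool.and_eq_true,
            decide_eq_true_eq, decide_eq_true_eq] at hok
          rcases hok with (h | h) | h
          · exact absurd h hsing
          · exact absurd h hspec
          · exact h
        obtain ⟨L0, hL0⟩ := ih.2 j hok'.1 hsok'
        obtain ⟨L1, hL1⟩ := ih.2 (j + 1) hok'.2 hsok'
        have h0 : GoodOn (Finset.univ : Finset (Finset (Fin n))) (j + 0) L0 := by rwa [Nat.add_zero]
        have hm0 := h0.map f0 f0_inj hd0 hc0
        have hm1 := hL1.map f1 f1_inj hd1 hc1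
        have hap := hm0.append hm1 disjoint_halves
        rw [union_halves] at hap
        exact ⟨_, hap⟩

lemma stackOk_all : ∀ k, k ≤ 15 → stackOk k = true := by decide

lemma union_symmDiff_union {d : ℕ} {S K A B : Finset (Fin d)} (hd : Disjoint S K)
    (hA : A ⊆ K) (hB : B ⊆ K) : (S ∪ A) ∆ (S ∪ B) = A ∆ B := by
  ext x
  rw [Finset.mem_symmDiff, Finset.mem_symmDiff]
  simp only [Finset.mem_union, not_or]
  have hAS : x ∈ A → x ∉ S := fun h => Finset.disjoint_right.mp hd (hA h)
  have hBS : x ∈ B → x ∉ S := fun h => Finset.disjoint_right.mp hd (hB h)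
  tauto

end CupStack

theorem levelCube_high_stackable (k l d : ℕ) (hk : k ≤ 15)
    (hl1 : 2 ^ k - k ≤ l) (hl2 : l ≤ 2 ^ k) (hd : l + k ≤ d)
    (S K : Finset (Fin d)) (hdisj : Disjoint S K) (hS : S.card = l) (hK : K.card = k) :
    IsStackableConf (cubeGraph d)
      (fun X => if (S ⊆ X ∧ X ⊆ S ∪ K) ∨ X = ∅ then 1 else 0) ∅ := by
  classical
  open CupStack in
  set C0 : Finset (Fin d) → ℕ :=
    fun X => if (S ⊆ X ∧ X ⊆ S ∪ K) ∨ X = ∅ then 1 else 0 with hC0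
  have hpow : k < 2 ^ k := Nat.lt_two_pow_self
  have hl0 : 1 ≤ l := by omega
  have hSne : S.Nonempty := Finset.card_pos.mp (by omega)
  -- the order embedding of Fin k onto K
  set g : Fin k → Fin d := fun i => K.orderEmbOfFin hK i with hg
  have hginj : Function.Injective g := (K.orderEmbOfFin hK).injective
  have hgmem : ∀ i, g i ∈ K := fun i => Finset.orderEmbOfFin_mem K hK i
  have hgsurj : ∀ x ∈ K, ∃ i, g i = x := by
    intro x hx
    have hr := Finset.range_orderEmbOfFin K hK
    have : x ∈ Set.range (K.orderEmbOfFin hK) := by rw [hr]; exact hx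
    obtain ⟨i, hi⟩ := this
    exact ⟨i, hi⟩
  -- the embedding of the abstract k-cube onto the level cube
  set E : Finset (Fin k) → Finset (Fin d) := fun T => S ∪ T.image g with hE
  have himgK : ∀ T : Finset (Fin k), T.image g ⊆ K := by
    intro T x hx
    obtain ⟨i, _, rfl⟩ := Finset.mem_image.mp hx
    exact hgmem i
  have hEd : ∀ x y : Finset (Fin k), (E x ∆ E y).card = (x ∆ y).card := by
    intro x y
    rw [hE]
    simp only
    rw [union_symmDiff_union hdisj (himgK x) (himgK y),
      ← Finset.image_symmDiff _ _ hginj]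
    exact Finset.card_image_of_injective _ hginj
  have hEinj : Function.Injective E := by
    intro x y h
    have h2 : (E x ∆ E y).card = 0 := by rw [h, symmDiff_self]; simp
    rw [hEd] at h2
    have h3 : x ∆ y = ⊥ := by
      rw [Finset.bot_eq_empty]
      exact Finset.card_eq_zero.mp h2
    exact symmDiff_eq_bot.mp h3
  have hEcard : ∀ T : Finset (Fin k), (E T).card = l + T.card := by
    intro T
    rw [hE]
    simp only
    rw [Finset.card_union_of_disjoint (Finset.disjoint_of_subset_right (himgK T) hdisj),
      hS, Finset.card_image_of_injective _ hginj]
  have hEcond : ∀ T : Finset (Fin k), S ⊆ E T ∧ E T ⊆ S ∪ K := by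
    intro T
    exact ⟨Finset.subset_union_left, Finset.union_subset_union_right (himgK T)⟩
  have hEne : ∀ T : Finset (Fin k), E T ≠ ∅ := by
    intro T h
    have := (hEcond T).1
    rw [h] at this
    exact hSne.ne_empty (Finset.subset_empty.mp this)
  have hEsurj : ∀ X : Finset (Fin d), S ⊆ X → X ⊆ S ∪ K → ∃ T, E T = X := by
    intro X h1 h2
    refine ⟨(Finset.univ : Finset (Fin k)).filter (fun i => g i ∈ X), ?_⟩
    rw [hE]
    simp only
    ext x
    simp only [Finset.mem_union, Finset.mem_image, Finset.mem_filter, Finset.mem_univ,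
      true_and]
    constructor
    · rintro (hx | ⟨i, hi, rfl⟩)
      · exact h1 hx
      · exact hi
    · intro hx
      rcases Finset.mem_union.mp (h2 hx) with hx' | hx'
      · exact Or.inl hx'
      · obtain ⟨i, rfl⟩ := hgsurj x hx'
        exact Or.inr ⟨i, hx, rfl⟩
  -- gather the cube onto the vertex Z of global rank 2^k
  have htk : 2 ^ k - l ≤ k := by omega
  obtain ⟨T0, -, hT0card⟩ := Finset.exists_subset_card_eq
    (show 2 ^ k - l ≤ (Finset.univ : Finset (Fin k)).card by
      rw [Finset.card_univ, Fintype.card_fin]; exact htk)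
  have hG0 : Gath (Finset.univ : Finset (Finset (Fin k))) ∅ :=
    (CupStack.main k).1 (stackOk_all k hk)
  have hGT0 : Gath (Finset.univ : Finset (Finset (Fin k))) T0 := by
    have hG := hG0.map (fun x => x ∆ T0) (translate_inj T0) (translate_hd T0)
    rw [translate_univ] at hG
    have e : (∅ : Finset (Fin k)) ∆ T0 = T0 := by
      rw [← Finset.bot_eq_empty, bot_symmDiff]
    exact e ▸ hG
  set Z : Finset (Fin d) := E T0 with hZ
  have hZcard : Z.card = 2 ^ k := by
    rw [hZ, hEcard, hT0card]; omega
  have hGd : Gath ((Finset.univ : Finset (Finset (Fin k))).image E) Z :=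
    hGT0.map E hEinj hEd
  have himgcard : ((Finset.univ : Finset (Finset (Fin k))).image E).card = 2 ^ k := by
    rw [Finset.card_image_of_injective _ hEinj, card_univ_finset_fin]
  have hmem : ∀ x, x ∈ (Finset.univ : Finset (Finset (Fin k))).image E ↔
      (S ⊆ x ∧ x ⊆ S ∪ K) := by
    intro x
    constructor
    · intro hx
      obtain ⟨T, _, rfl⟩ := Finset.mem_image.mp hx
      exact hEcond T
    · rintro ⟨h1, h2⟩
      obtain ⟨T, rfl⟩ := hEsurj x h1 h2
      exact Finset.mem_image.mpr ⟨T, Finset.mem_univ _, rfl⟩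
  have hempty_not : (∅ : Finset (Fin d)) ∉ (Finset.univ : Finset (Finset (Fin k))).image E := by
    intro h
    obtain ⟨T, _, hT⟩ := Finset.mem_image.mp h
    exact hEne T hT
  -- execute the gather
  have step1 := hGd.exec C0 (by
    intro x hx
    rw [hC0]
    simp only
    rw [if_pos (Or.inl ((hmem x).mp hx))])
  set A : Finset (Finset (Fin d)) := (Finset.univ : Finset (Finset (Fin k))).image E with hA
  set C1 : Finset (Fin d) → ℕ :=
    fun x => if x = Z then A.card else if x ∈ A then 0 else C0 x with hC1
  have hZA : Z ∈ A := Finset.mem_image.mpr ⟨T0, Finset.mem_univ _, rfl⟩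
  have hZne : Z ≠ ∅ := hEne T0
  have hC1Z : C1 Z = 2 ^ k := by rw [hC1]; simp only [if_pos rfl]; exact himgcard
  have hC1e : C1 ∅ = 1 := by
    rw [hC1]
    simp only [if_neg (Ne.symm hZne), if_neg hempty_not]
    show (if (S ⊆ ∅ ∧ (∅ : Finset (Fin d)) ⊆ S ∪ K) ∨ (∅ : Finset (Fin d)) = ∅ then 1 else 0) = 1
    exact if_pos (Or.inr rfl)
  -- the final move Z → ∅
  have move : CupMove (cubeGraph d) C1
      (fun w => if w = Z then 0 else if w = ∅ then C1 Z + C1 ∅ else C1 w) := by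
    refine ⟨Z, ∅, hZne, ?_, ?_, ?_, fun w => rfl⟩
    · rw [hC1Z]; omega
    · exact hC1e.ge
    · rw [cube_dist, hC1Z]
      have : Z ∆ (∅ : Finset (Fin d)) = Z := by rw [← Finset.bot_eq_empty, symmDiff_bot]
      rw [this, hZcard]
  -- total number of cups
  have hsum : ∑ v : Finset (Fin d), C0 v = 2 ^ k + 1 := by
    rw [hC0]
    simp only
    rw [Finset.sum_boole]
    have hfilter : (Finset.univ : Finset (Finset (Fin d))).filter
        (fun X => (S ⊆ X ∧ X ⊆ S ∪ K) ∨ X = ∅) = insert ∅ A := by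
      ext x
      rw [Finset.mem_filter, Finset.mem_insert]
      constructor
      · rintro ⟨-, h | rfl⟩
        · exact Or.inr ((hmem x).mpr h)
        · exact Or.inl rfl
      · rintro (rfl | hx)
        · exact ⟨Finset.mem_univ _, Or.inr rfl⟩
        · exact ⟨Finset.mem_univ _, Or.inl ((hmem x).mp hx)⟩
    rw [hfilter, Finset.card_insert_of_notMem hempty_not, himgcard]
    exact Nat.cast_id _
  -- conclude
  have hfinal : (fun w => if w = Z then 0 else if w = ∅ then C1 Z + C1 ∅ else C1 w) =
      (fun w => if w = ∅ then ∑ v, C0 v else 0) := by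
    funext w
    by_cases hwZ : w = Z
    · subst hwZ
      rw [if_pos rfl, if_neg hZne]
    · rw [if_neg hwZ]
      by_cases hwe : w = ∅
      · subst hwe
        rw [if_pos rfl, if_pos rfl, hC1Z, hC1e, hsum]
      · rw [if_neg hwe, if_neg hwe, hC1]
        simp only [if_neg hwZ]
        by_cases hwA : w ∈ A
        · rw [if_pos hwA]
        · rw [if_neg hwA, hC0]
          simp only
          rw [if_neg]
          rintro (h | rfl)
          · exact hwA ((hmem w).mpr h)
          · exact hwe rfl
  unfold IsStackableConf
  have step2 : Relation.ReflTransGen (CupMove (cubeGraph d)) C1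
      (fun w => if w = ∅ then ∑ v, C0 v else 0) :=
    hfinal ▸ Relation.ReflTransGen.single move
  exact step1.trans step2
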